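/- Let (Ω, 𝓕, Q) be a probability space and X, Y ∈ L²(Q) real-valued random variables with standard deviations σ_X, σ_Y. Then (𝔼[XY])² ≤ 𝔼[X²]·𝔼[Y²] − (|𝔼X|·σ_Y − |𝔼Y|·σ_X)² ≤ 𝔼[X²]·𝔼[Y²] (Walker's refinement of the Cauchy–Schwarz inequality). -/

import Mathlib

open MeasureTheory

section Aux

variable {Ω : Type*} [MeasurableSpace Ω] {Q : Measure Ω}

lemma aux_integrable_mul {f g : Ω → ℝ} (hf : MemLp f 2 Q) (hg : MemLp g 2 Q) :
    Integrable (fun ω => f ω * g ω) Q := by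
  have h := L2.integrable_inner (𝕜 := ℝ) (hf.toLp f) (hg.toLp g)
  refine h.congr ?_
  filter_upwards [hf.coeFn_toLp, hg.coeFn_toLp] with ω h1 h2
  simp [h1, h2, mul_comm]

lemma aux_cauchy_schwarz {f g : Ω → ℝ} (hf : MemLp f 2 Q) (hg : MemLp g 2 Q) :
    (∫ ω, f ω * g ω ∂Q) ^ 2 ≤ (∫ ω, f ω ^ 2 ∂Q) * (∫ ω, g ω ^ 2 ∂Q) := by
  set F := hf.toLp f
  set G := hg.toLp g
  have hFG : ∫ ω, f ω * g ω ∂Q = inner (𝕜 := ℝ) F G := by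
    rw [L2.inner_def]
    refine integral_congr_ae ?_
    filter_upwards [hf.coeFn_toLp, hg.coeFn_toLp] with ω h1 h2
    simp [F, G, h1, h2, mul_comm]
  have hFF : ∫ ω, f ω ^ 2 ∂Q = inner (𝕜 := ℝ) F F := by
    rw [L2.inner_def]
    refine integral_congr_ae ?_
    filter_upwards [hf.coeFn_toLp] with ω h1
    simp [F, h1, sq]
  have hGG : ∫ ω, g ω ^ 2 ∂Q = inner (𝕜 := ℝ) G G := by
    rw [L2.inner_def]
    refine integral_congr_ae ?_
    filter_upwards [hg.coeFn_toLp] with ω h2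
    simp [G, h2, sq]
  rw [hFG, hFF, hGG, sq]
  exact real_inner_mul_inner_self_le F G

end Aux

/-- **Walker's refinement of the Cauchy–Schwarz inequality.** For square-integrable
real random variables `X, Y` on a probability space, with `σ_X = √(𝔼[X²] − (𝔼X)²)`,
`(𝔼[XY])² ≤ 𝔼[X²] 𝔼[Y²] − (|𝔼X| σ_Y − |𝔼Y| σ_X)² ≤ 𝔼[X²] 𝔼[Y²]`. -/
theorem walker_cauchy_schwarz {Ω : Type*} [MeasurableSpace Ω] (Q : Measure Ω)
    [IsProbabilityMeasure Q] (X Y : Ω → ℝ)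
    (hX : MemLp X 2 Q) (hY : MemLp Y 2 Q) :
    (∫ ω, X ω * Y ω ∂Q) ^ 2 ≤
        (∫ ω, X ω ^ 2 ∂Q) * (∫ ω, Y ω ^ 2 ∂Q)
        - (|∫ ω, X ω ∂Q| * Real.sqrt ((∫ ω, Y ω ^ 2 ∂Q) - (∫ ω, Y ω ∂Q) ^ 2)
            - |∫ ω, Y ω ∂Q| * Real.sqrt ((∫ ω, X ω ^ 2 ∂Q) - (∫ ω, X ω ∂Q) ^ 2)) ^ 2 ∧
      (∫ ω, X ω ^ 2 ∂Q) * (∫ ω, Y ω ^ 2 ∂Q)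
        - (|∫ ω, X ω ∂Q| * Real.sqrt ((∫ ω, Y ω ^ 2 ∂Q) - (∫ ω, Y ω ∂Q) ^ 2)
            - |∫ ω, Y ω ∂Q| * Real.sqrt ((∫ ω, X ω ^ 2 ∂Q) - (∫ ω, X ω ∂Q) ^ 2)) ^ 2
      ≤ (∫ ω, X ω ^ 2 ∂Q) * (∫ ω, Y ω ^ 2 ∂Q) := by
  set m := ∫ ω, X ω ∂Q with hm
  set n := ∫ ω, Y ω ∂Q with hn
  set A := ∫ ω, X ω ^ 2 ∂Q with hA
  set B := ∫ ω, Y ω ^ 2 ∂Q with hB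
  have hXi : Integrable X Q := hX.integrable one_le_two
  have hYi : Integrable Y Q := hY.integrable one_le_two
  have hX2 : Integrable (fun ω => X ω ^ 2) Q := hX.integrable_sq
  have hY2 : Integrable (fun ω => Y ω ^ 2) Q := hY.integrable_sq
  have hXY : Integrable (fun ω => X ω * Y ω) Q := aux_integrable_mul hX hY
  have hXc : MemLp (fun ω => X ω - m) 2 Q := hX.sub (memLp_const m)
  have hYc : MemLp (fun ω => Y ω - n) 2 Q := hY.sub (memLp_const n)
  -- variance computations
  have hvarX : ∫ ω, (X ω - m) ^ 2 ∂Q = A - m ^ 2 := by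
    have : ∀ ω, (X ω - m) ^ 2 = X ω ^ 2 - (2 * m) * X ω + m ^ 2 := by intro ω; ring
    simp_rw [this]
    have h1 : Integrable (fun ω => X ω ^ 2 - 2 * m * X ω) Q := hX2.sub (hXi.const_mul _)
    rw [integral_add h1 (integrable_const _),
      integral_sub hX2 (hXi.const_mul _), integral_const_mul, integral_const]
    simp [← hm, ← hA]
    ring
  have hvarY : ∫ ω, (Y ω - n) ^ 2 ∂Q = B - n ^ 2 := by
    have : ∀ ω, (Y ω - n) ^ 2 = Y ω ^ 2 - (2 * n) * Y ω + n ^ 2 := by intro ω; ring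
    simp_rw [this]
    have h1 : Integrable (fun ω => Y ω ^ 2 - 2 * n * Y ω) Q := hY2.sub (hYi.const_mul _)
    rw [integral_add h1 (integrable_const _),
      integral_sub hY2 (hYi.const_mul _), integral_const_mul, integral_const]
    simp [← hn, ← hB]
    ring
  have hvarX0 : 0 ≤ A - m ^ 2 := by
    rw [← hvarX]; exact integral_nonneg fun ω => sq_nonneg _
  have hvarY0 : 0 ≤ B - n ^ 2 := by
    rw [← hvarY]; exact integral_nonneg fun ω => sq_nonneg _
  set sX := Real.sqrt (A - m ^ 2) with hsX
  set sY := Real.sqrt (B - n ^ 2) with hsY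
  have hsX0 : 0 ≤ sX := Real.sqrt_nonneg _
  have hsY0 : 0 ≤ sY := Real.sqrt_nonneg _
  have hsX2 : sX ^ 2 = A - m ^ 2 := Real.sq_sqrt hvarX0
  have hsY2 : sY ^ 2 = B - n ^ 2 := Real.sq_sqrt hvarY0
  -- covariance
  have hcov : ∫ ω, (X ω - m) * (Y ω - n) ∂Q = (∫ ω, X ω * Y ω ∂Q) - m * n := by
    have : ∀ ω, (X ω - m) * (Y ω - n) = X ω * Y ω - n * X ω - m * Y ω + m * n := by
      intro ω; ring
    simp_rw [this]
    have h1 : Integrable (fun ω => X ω * Y ω - n * X ω) Q := hXY.sub (hXi.const_mul _)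
    have h2 : Integrable (fun ω => X ω * Y ω - n * X ω - m * Y ω) Q := h1.sub (hYi.const_mul _)
    rw [integral_add h2 (integrable_const _),
      integral_sub h1 (hYi.const_mul _),
      integral_sub hXY (hXi.const_mul _), integral_const_mul, integral_const_mul,
      integral_const]
    simp [← hm, ← hn]
    ring
  have hcs := aux_cauchy_schwarz hXc hYc
  rw [hcov, hvarX, hvarY] at hcs
  set I := ∫ ω, X ω * Y ω ∂Q with hI
  -- |I - mn| ≤ sX * sY
  have habs : |I - m * n| ≤ sX * sY := by
    calc |I - m * n| = Real.sqrt ((I - m * n) ^ 2) := (Real.sqrt_sq_eq_abs _).symm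
      _ ≤ Real.sqrt ((A - m ^ 2) * (B - n ^ 2)) := Real.sqrt_le_sqrt hcs
      _ = sX * sY := Real.sqrt_mul hvarX0 _
  have key : |I| ≤ |m| * |n| + sX * sY := by
    calc |I| ≤ |I - m * n| + |m * n| := by
            have := abs_add_le (I - m * n) (m * n); simpa using this
      _ ≤ sX * sY + |m| * |n| := by rw [abs_mul]; linarith
      _ = |m| * |n| + sX * sY := by ring
  have hrhs : A * B - (|m| * sY - |n| * sX) ^ 2 = (|m| * |n| + sX * sY) ^ 2 := by
    have hA' : A = |m| ^ 2 + sX ^ 2 := by rw [sq_abs]; linarith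
    have hB' : B = |n| ^ 2 + sY ^ 2 := by rw [sq_abs]; linarith
    rw [hA', hB']; ring
  constructor
  · rw [hrhs]
    calc I ^ 2 = |I| ^ 2 := (sq_abs I).symm
      _ ≤ (|m| * |n| + sX * sY) ^ 2 := by
          apply pow_le_pow_left₀ (abs_nonneg I) key 2
  · linarith [sq_nonneg (|m| * sY - |n| * sX)]
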